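/- Let f, g : ℕ → ℕ satisfy n = o(f(n)) and g(n) = o(n²) as n → ∞, and let l : ℕ → ℕ satisfy f(n) ≤ l(n) ≤ g(n) for all n. Then r(l(n)) ~ l(n)²/(2·α_n) as n → ∞, i.e. the ratio r(l(n))·2·α_n / l(n)² tends to 1. -/

import Mathlib

/-- The vertices of `G(n,3,1)`: 3-element subsets of `{1, …, n}`. -/
abbrev Vtx (n : ℕ) := {s : Finset ℕ // s ⊆ Finset.Icc 1 n ∧ s.card = 3}

/-- The graph `G(n,3,1)`: two 3-element subsets of `{1, …, n}` are adjacent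
iff they intersect in exactly one element. -/
def G (n : ℕ) : SimpleGraph (Vtx n) where
  Adj a b := (a.1 ∩ b.1).card = 1
  symm := ⟨by intro a b h; (try dsimp only at h ⊢); rwa [Finset.inter_comm]⟩
  loopless := ⟨by intro a h; (try dsimp only at h); rw [Finset.inter_self, a.2.2] at h; omega⟩

instance (n : ℕ) : DecidableRel (G n).Adj := fun a b =>
  inferInstanceAs (Decidable ((a.1 ∩ b.1).card = 1))

instance (n : ℕ) : Fintype (Vtx n) :=
  Fintype.subtype ((Finset.Icc 1 n).powerset.filter fun s => s.card = 3) (by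
    intro s
    simp [Finset.mem_powerset, and_comm])

instance (n : ℕ) (s : Set (Vtx n)) : DecidableRel ((G n).induce s).Adj := fun a b =>
  inferInstanceAs (Decidable (((a : Vtx n).1 ∩ (b : Vtx n).1).card = 1))

/-- The number of edges of `G(n,3,1)` with both endpoints in `W`. -/
def edgesIn (n : ℕ) (W : Finset (Vtx n)) : ℕ :=
  ((G n).induce (W : Set (Vtx n))).edgeFinset.card

/-- The independence number of `G(n,3,1)`. -/
noncomputable def alpha (n : ℕ) : ℕ :=
  sSup {k | ∃ W : Finset (Vtx n), W.card = k ∧ ∀ u ∈ W, ∀ v ∈ W, ¬ (G n).Adj u v}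

/-- The minimal number of edges induced on a vertex subset of cardinality `l`. -/
noncomputable def rmin (n l : ℕ) : ℕ :=
  sInf {m | ∃ W : Finset (Vtx n), W.card = l ∧ edgesIn n W = m}


section Bridge
variable {V : Type*} [DecidableEq V]

/-- ordered adjacent pairs inside `W` -/
def pc (Γ : SimpleGraph V) [DecidableRel Γ.Adj] (W : Finset V) : ℕ :=
  ((W ×ˢ W).filter fun p => Γ.Adj p.1 p.2).card

omit [DecidableEq V] in
lemma pc_eq (Γ : SimpleGraph V) [DecidableRel Γ.Adj] (W : Finset V) :
    pc Γ W = 2 * ((Γ.induce (W : Set V)).edgeFinset.card) := by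
  classical
  rw [← SimpleGraph.sum_degrees_eq_twice_card_edges]
  rw [pc, Finset.card_filter, Finset.sum_product]
  rw [← Finset.sum_attach W (fun w => ∑ q ∈ W, if Γ.Adj w q then 1 else 0)]
  rw [← Finset.univ_eq_attach]
  apply Finset.sum_congr rfl
  intro v _
  have : (SimpleGraph.induce (↑W : Set V) Γ).degree v
      = (W.filter fun q => Γ.Adj v.1 q).card := by
    rw [SimpleGraph.degree, SimpleGraph.neighborFinset]
    apply Finset.card_bij (fun (u : ↥(↑W : Set V)) _ => (u : V))
    · intro u hu
      simp only [Finset.mem_filter, Finset.mem_coe] at *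
      exact ⟨by exact_mod_cast u.2, by simpa [SimpleGraph.mem_neighborFinset] using hu⟩
    · intro a ha b hb h; exact Subtype.ext h
    · intro b hb
      simp only [Finset.mem_filter] at hb
      exact ⟨⟨b, by exact_mod_cast hb.1⟩,
        by simpa [SimpleGraph.mem_neighborFinset] using hb.2, rfl⟩
  rw [this, Finset.card_filter]

omit [DecidableEq V] in
lemma pc_mono (Γ : SimpleGraph V) [DecidableRel Γ.Adj] {W W' : Finset V} (h : W' ⊆ W) :
    pc Γ W' ≤ pc Γ W := by
  apply Finset.card_le_card
  exact Finset.filter_subset_filter _ (Finset.product_subset_product h h)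
lemma exists_maximal_indep (Γ : SimpleGraph V) (W : Finset V) (hW : W.Nonempty) :
    ∃ I ⊆ W, I.Nonempty ∧ (∀ u ∈ I, ∀ w ∈ I, ¬ Γ.Adj u w) ∧
      ∀ v ∈ W \ I, ∃ u ∈ I, Γ.Adj v u := by
  classical
  set 𝓘 := W.powerset.filter (fun I => ∀ u ∈ I, ∀ w ∈ I, ¬ Γ.Adj u w) with h𝓘
  obtain ⟨v0, hv0⟩ := hW
  have hv0' : {v0} ∈ 𝓘 := by
    simp [h𝓘, Finset.singleton_subset_iff, hv0]
  obtain ⟨I, hI, hImax⟩ := 𝓘.exists_max_image Finset.card ⟨_, hv0'⟩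
  simp only [h𝓘, Finset.mem_filter, Finset.mem_powerset] at hI
  refine ⟨I, hI.1, ?_, hI.2, ?_⟩
  · rcases Finset.eq_empty_or_nonempty I with h | h
    · exfalso
      have := hImax _ hv0'
      simp [h] at this
    · exact h
  · intro v hv
    simp only [Finset.mem_sdiff] at hv
    by_contra hcon
    push_neg at hcon
    have hins : insert v I ∈ 𝓘 := by
      simp only [h𝓘, Finset.mem_filter, Finset.mem_powerset]
      constructor
      · exact Finset.insert_subset hv.1 hI.1
      · intro x hx y hy
        rcases Finset.mem_insert.mp hx with h1 | h1 <;>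
          rcases Finset.mem_insert.mp hy with h2 | h2
        · rw [h1, h2]; exact Γ.loopless.irrefl v
        · rw [h1]; exact hcon y h2
        · rw [h2]; intro hadj; exact hcon x h1 hadj.symm
        · exact hI.2 x h1 y h2
    have := hImax _ hins
    rw [Finset.card_insert_of_notMem hv.2] at this
    omega

lemma pc_lower (Γ : SimpleGraph V) [DecidableRel Γ.Adj] (a : ℕ)
    (ha : ∀ I : Finset V, (∀ u ∈ I, ∀ w ∈ I, ¬ Γ.Adj u w) → I.card ≤ a) :
    ∀ (m : ℕ) (W : Finset V), W.card = m → m ^ 2 ≤ a * pc Γ W + a * m := by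
  intro m
  induction m using Nat.strong_induction_on with
  | _ m ih =>
    intro W hWm
    rcases W.eq_empty_or_nonempty with rfl | hW
    · simp at hWm; simp [← hWm]
    obtain ⟨I, hIW, hIne, hIind, hImax⟩ := exists_maximal_indep Γ W hW
    classical
    set A := W \ I with hA
    have hIa : I.card ≤ a := ha I hIind
    have hI1 : 1 ≤ I.card := hIne.card_pos
    have hm : A.card + I.card = m := by
      rw [hA]; rw [← hWm]; exact Finset.card_sdiff_add_card_eq_card hIW
    set S1 := (A ×ˢ A).filter (fun p => Γ.Adj p.1 p.2) with hS1d
    set S2 := (A ×ˢ I).filter (fun p => Γ.Adj p.1 p.2) with hS2d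
    set S3 := (I ×ˢ A).filter (fun p => Γ.Adj p.1 p.2) with hS3d
    have hdAI : Disjoint A I := Finset.sdiff_disjoint
    have hS2 : A.card ≤ S2.card := by
      apply Finset.card_le_card_of_injOn (fun x => ((x : V),
        if h : ∃ u ∈ I, Γ.Adj x u then h.choose else x))
      · intro v hv
        have hex : ∃ u ∈ I, Γ.Adj v u := hImax v hv
        simp only [hS2d, Finset.mem_coe, Finset.mem_filter, Finset.mem_product, dif_pos hex]
        exact ⟨⟨hv, hex.choose_spec.1⟩, hex.choose_spec.2⟩
      · intro x hx y hy hxy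
        exact congrArg Prod.fst hxy
    have hS3 : A.card ≤ S3.card := by
      apply Finset.card_le_card_of_injOn (fun x =>
        ((if h : ∃ u ∈ I, Γ.Adj x u then h.choose else x : V), (x : V)))
      · intro v hv
        have hex : ∃ u ∈ I, Γ.Adj v u := hImax v hv
        simp only [hS3d, Finset.mem_coe, Finset.mem_filter, Finset.mem_product, dif_pos hex]
        exact ⟨⟨hex.choose_spec.1, hv⟩, hex.choose_spec.2.symm⟩
      · intro x hx y hy hxy
        exact congrArg Prod.snd hxy
    have d12 : Disjoint S1 S2 := by
      rw [Finset.disjoint_left]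
      intro p hp1 hp2
      simp only [hS1d, hS2d, Finset.mem_filter, Finset.mem_product] at hp1 hp2
      exact (Finset.disjoint_left.mp hdAI hp1.1.2) hp2.1.2
    have d123 : Disjoint (S1 ∪ S2) S3 := by
      rw [Finset.disjoint_left]
      intro p hp1 hp2
      simp only [hS3d, Finset.mem_filter, Finset.mem_product] at hp2
      rcases Finset.mem_union.mp hp1 with h | h <;>
        · simp only [hS1d, hS2d, Finset.mem_filter, Finset.mem_product] at h
          exact (Finset.disjoint_left.mp hdAI h.1.1) hp2.1.1
    have hsub : S1 ∪ S2 ∪ S3 ⊆ (W ×ˢ W).filter (fun p => Γ.Adj p.1 p.2) := by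
      have hAW : A ⊆ W := Finset.sdiff_subset
      refine Finset.union_subset (Finset.union_subset ?_ ?_) ?_ <;>
        exact Finset.filter_subset_filter _ (Finset.product_subset_product
          (by first | exact hAW | exact hIW) (by first | exact hAW | exact hIW))
    have hsplit : pc Γ A + A.card + A.card ≤ pc Γ W := by
      calc pc Γ A + A.card + A.card ≤ S1.card + S2.card + S3.card := by
            simp only [pc, ← hS1d]; omega
        _ = (S1 ∪ S2 ∪ S3).card := by
            rw [Finset.card_union_of_disjoint d123, Finset.card_union_of_disjoint d12]
        _ ≤ pc Γ W := Finset.card_le_card hsub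
    have hklt : A.card < m := by omega
    have hpcA := ih A.card hklt A rfl
    have h1 : a * (pc Γ A + A.card + A.card) ≤ a * pc Γ W := Nat.mul_le_mul_left a hsplit
    have h2 : I.card * A.card ≤ a * A.card := Nat.mul_le_mul_right _ hIa
    have h3 : I.card * I.card ≤ a * I.card := Nat.mul_le_mul_right _ hIa
    nlinarith [hpcA, h1, h2, h3, hm]

end Bridge

lemma meet_trans {A B C : Finset ℕ} (hA : A.card = 3)
    (h1 : 2 ≤ (A ∩ B).card) (h2 : 2 ≤ (A ∩ C).card) : (B ∩ C).Nonempty := by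
  have hsub : (A ∩ B) ∪ (A ∩ C) ⊆ A := by
    apply Finset.union_subset <;> exact Finset.inter_subset_left
  have hu : ((A ∩ B) ∪ (A ∩ C)).card ≤ 3 := hA ▸ Finset.card_le_card hsub
  have hi := Finset.card_inter_add_card_union (A ∩ B) (A ∩ C)
  have hne : 0 < ((A ∩ B) ∩ (A ∩ C)).card := by omega
  obtain ⟨x, hx⟩ := Finset.card_pos.mp hne
  simp only [Finset.mem_inter] at hx
  exact ⟨x, Finset.mem_inter.mpr ⟨hx.1.2, hx.2.2⟩⟩

lemma aux_mem {P D : Finset ℕ} {a : ℕ} (ha : a ∉ P) (hP : P.card = 2)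
    (hDA : (D ∩ insert a P).card = 2) (hnp : ¬ P ⊆ D) :
    a ∈ D ∧ (D ∩ P).card = 1 := by
  have haD : a ∈ D := by
    by_contra haD
    have : D ∩ insert a P = D ∩ P := by
      ext z
      simp only [Finset.mem_inter, Finset.mem_insert]
      constructor
      · rintro ⟨hz, rfl | hz2⟩
        · exact absurd hz haD
        · exact ⟨hz, hz2⟩
      · rintro ⟨hz, hz2⟩; exact ⟨hz, Or.inr hz2⟩
    rw [this] at hDA
    have : D ∩ P = P := Finset.eq_of_subset_of_card_le Finset.inter_subset_right (by omega)
    exact hnp (this ▸ Finset.inter_subset_left)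
  have : D ∩ insert a P = insert a (D ∩ P) := by
    rw [Finset.inter_insert_of_mem haD]
  rw [this, Finset.card_insert_of_notMem (by simp [ha])] at hDA
  exact ⟨haD, by omega⟩
lemma third_elt {A P : Finset ℕ} (hA : A.card = 3) (hP : P.card = 2) (hPA : P ⊆ A) :
    ∃ a, a ∉ P ∧ A = insert a P := by
  have hd : (A \ P).card = 1 := by rw [Finset.card_sdiff_of_subset hPA, hA, hP]
  obtain ⟨a, haa⟩ := Finset.card_eq_one.mp hd
  have ha : a ∈ A \ P := haa ▸ Finset.mem_singleton_self a
  rw [Finset.mem_sdiff] at ha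
  refine ⟨a, ha.2, ?_⟩
  apply (Finset.eq_of_subset_of_card_le (Finset.insert_subset ha.1 hPA) ?_).symm
  rw [hA, Finset.card_insert_of_notMem ha.2, hP]

section CS
variable {C : Finset (Finset ℕ)}

lemma class_structure {C : Finset (Finset ℕ)} (h3 : ∀ A ∈ C, A.card = 3)
    (hint : ∀ A ∈ C, ∀ B ∈ C, A ≠ B → (A ∩ B).card = 2) :
    (∃ P : Finset ℕ, P.card = 2 ∧ ∀ B ∈ C, P ⊆ B) ∨ (C.biUnion id).card ≤ 4 := by
  rcases C.eq_empty_or_nonempty with rfl | ⟨A, hAmem⟩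
  · exact Or.inl ⟨{0, 1}, by norm_num, by simp⟩
  by_cases hone : ∀ B ∈ C, B = A
  · obtain ⟨x, y, z, hxy, hxz, hyz, hAe⟩ := Finset.card_eq_three.mp (h3 A hAmem)
    refine Or.inl ⟨{x, y}, by rw [Finset.card_insert_of_notMem (by simp [hxy]),
      Finset.card_singleton], ?_⟩
    intro B hB
    rw [hone B hB, hAe]
    intro t ht
    simp only [Finset.mem_insert, Finset.mem_singleton] at ht ⊢
    tauto
  push_neg at hone
  obtain ⟨B, hBmem, hBA⟩ := hone
  set P := A ∩ B with hPdef
  have hPcard : P.card = 2 := hint A hAmem B hBmem (Ne.symm hBA)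
  by_cases hcp : ∀ E ∈ C, P ⊆ E
  · exact Or.inl ⟨P, hPcard, hcp⟩
  push_neg at hcp
  obtain ⟨D, hDmem, hDP⟩ := hcp
  have hPA : P ⊆ A := Finset.inter_subset_left
  have hPB : P ⊆ B := Finset.inter_subset_right
  have hDA : D ≠ A := by rintro rfl; exact hDP hPA
  have hDB : D ≠ B := by rintro rfl; exact hDP hPB
  obtain ⟨a, haP, hAeq⟩ := third_elt (h3 A hAmem) hPcard hPA
  obtain ⟨b, hbP, hBeq⟩ := third_elt (h3 B hBmem) hPcard hPB
  have hab : a ≠ b := by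
    rintro rfl
    apply haP
    rw [hPdef, Finset.mem_inter, hAeq, hBeq]
    exact ⟨Finset.mem_insert_self _ _, Finset.mem_insert_self _ _⟩
  have hDAi : (D ∩ A).card = 2 := hint D hDmem A hAmem hDA
  have hDBi : (D ∩ B).card = 2 := hint D hDmem B hBmem hDB
  obtain ⟨haD, hDP1⟩ := aux_mem haP hPcard (by rwa [← hAeq]) hDP
  obtain ⟨hbD, -⟩ := aux_mem hbP hPcard (by rwa [← hBeq]) hDP
  right
  have hADi : (A ∩ D).card = 2 := hint A hAmem D hDmem (Ne.symm hDA)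
  have hADu : (A ∪ D).card = 4 := by
    have := Finset.card_union_add_card_inter A D
    rw [h3 A hAmem, h3 D hDmem, hADi] at this
    omega
  have hkey : ∀ E ∈ C, E ⊆ A ∪ D := by
    intro E hEmem
    by_cases hEA : E = A
    · rw [hEA]; exact Finset.subset_union_left
    by_cases hED : E = D
    · rw [hED]; exact Finset.subset_union_right
    by_cases hEP : P ⊆ E
    · obtain ⟨e, heP, hEeq⟩ := third_elt (h3 E hEmem) hPcard hEP
      have hEDi : (E ∩ D).card = 2 := hint E hEmem D hDmem hED
      have heD : e ∈ D := by
        by_contra heD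
        have : E ∩ D = P ∩ D := by
          rw [hEeq]
          ext z
          simp only [Finset.mem_inter, Finset.mem_insert]
          constructor
          · rintro ⟨rfl | hz, hzD⟩
            · exact absurd hzD heD
            · exact ⟨hz, hzD⟩
          · rintro ⟨hz, hzD⟩; exact ⟨Or.inr hz, hzD⟩
        rw [this, Finset.inter_comm] at hEDi
        omega
      rw [hEeq]
      apply Finset.insert_subset (Finset.mem_union_right _ heD)
      exact hPA.trans Finset.subset_union_left
    · have hEAi : (E ∩ A).card = 2 := hint E hEmem A hAmem hEA
      have hEBi : (E ∩ B).card = 2 := hint E hEmem B hBmem (by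
        rintro rfl; exact hEP hPB)
      obtain ⟨haE, hEP1⟩ := aux_mem haP hPcard (by rwa [← hAeq]) hEP
      obtain ⟨hbE, -⟩ := aux_mem hbP hPcard (by rwa [← hBeq]) hEP
      have hsubE : ({a, b} ∪ (E ∩ P)) ⊆ E := by
        apply Finset.union_subset _ Finset.inter_subset_left
        intro z hz
        simp only [Finset.mem_insert, Finset.mem_singleton] at hz
        rcases hz with rfl | rfl
        · exact haE
        · exact hbE
      have hcard : ({a, b} ∪ (E ∩ P)).card = 3 := by
        rw [Finset.card_union_of_disjoint, Finset.card_insert_of_notMem (by simp [hab]),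
          Finset.card_singleton, hEP1]
        rw [Finset.disjoint_left]
        intro z hz hz2
        simp only [Finset.mem_insert, Finset.mem_singleton] at hz
        have hzP : z ∈ P := (Finset.mem_inter.mp hz2).2
        rcases hz with rfl | rfl
        · exact haP hzP
        · exact hbP hzP
      have hEeq : E = {a, b} ∪ (E ∩ P) :=
        (Finset.eq_of_subset_of_card_le hsubE (by rw [hcard, h3 E hEmem])).symm
      rw [hEeq]
      apply Finset.union_subset
      · intro z hz
        simp only [Finset.mem_insert, Finset.mem_singleton] at hz
        rcases hz with rfl | rfl
        · exact Finset.mem_union_left _ (by rw [hAeq]; exact Finset.mem_insert_self _ _)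
        · exact Finset.mem_union_right _ hbD
      · exact (Finset.inter_subset_right.trans hPA).trans Finset.subset_union_left
  calc (C.biUnion id).card ≤ (A ∪ D).card := by
        apply Finset.card_le_card
        intro z hz
        obtain ⟨E, hE, hzE⟩ := Finset.mem_biUnion.mp hz
        exact hkey E hE hzE
    _ = 4 := hADu
lemma inter_card_options {S : Finset (Finset ℕ)} (h3 : ∀ A ∈ S, A.card = 3)
    (hint : ∀ A ∈ S, ∀ B ∈ S, A ≠ B → (A ∩ B).card ≠ 1)
    {A B : Finset ℕ} (hA : A ∈ S) (hB : B ∈ S) (hAB : A ≠ B) :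
    (A ∩ B).card = 0 ∨ (A ∩ B).card = 2 := by
  have h1 : (A ∩ B).card ≠ 1 := hint A hA B hB hAB
  have hle : (A ∩ B).card ≤ 3 := by
    calc (A ∩ B).card ≤ A.card := Finset.card_le_card Finset.inter_subset_left
      _ = 3 := h3 A hA
  have h3' : (A ∩ B).card ≠ 3 := by
    intro hc
    apply hAB
    have hABA : A ∩ B = A := Finset.eq_of_subset_of_card_le Finset.inter_subset_left
      (by rw [hc, h3 A hA])
    have : A ⊆ B := hABA ▸ Finset.inter_subset_right
    exact Finset.eq_of_subset_of_card_le this (by rw [h3 A hA, h3 B hB])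
  omega

lemma class_card {C : Finset (Finset ℕ)} (h3 : ∀ A ∈ C, A.card = 3)
    (hint : ∀ A ∈ C, ∀ B ∈ C, A ≠ B → (A ∩ B).card = 2) :
    C.card ≤ (C.biUnion id).card := by
  classical
  rcases class_structure h3 hint with ⟨P, hP2, hcp⟩ | h4
  · set f : Finset ℕ → ℕ := fun B => if h : (B \ P).Nonempty then (B \ P).min' h else 0
      with hf
    have hsing : ∀ B ∈ C, B \ P = {f B} := by
      intro B hB
      have hc1 : (B \ P).card = 1 := by
        rw [Finset.card_sdiff_of_subset (hcp B hB), h3 B hB, hP2]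
      obtain ⟨x, hx⟩ := Finset.card_eq_one.mp hc1
      have hne : (B \ P).Nonempty := by rw [hx]; exact ⟨x, Finset.mem_singleton_self x⟩
      rw [hf]
      simp only [dif_pos hne]
      have hmx : (B \ P).min' hne = x := by
        have h1 := (B \ P).min'_mem hne
        have h2 : x ∈ B \ P := by rw [hx]; exact Finset.mem_singleton_self x
        exact Finset.card_le_one.mp (by omega) _ h1 _ h2
      rw [hmx]
      exact hx
    apply Finset.card_le_card_of_injOn f
    · intro B hB
      have : f B ∈ B \ P := by rw [hsing B hB]; exact Finset.mem_singleton_self _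
      exact Finset.mem_biUnion.mpr ⟨B, hB, (Finset.mem_sdiff.mp this).1⟩
    · intro B hB B' hB' he
      have e1 : B = P ∪ B \ P := (Finset.union_sdiff_of_subset (hcp B hB)).symm
      have e2 : B' = P ∪ B' \ P := (Finset.union_sdiff_of_subset (hcp B' hB')).symm
      rw [e1, e2, hsing B hB, hsing B' hB', he]
  · have hsub : C ⊆ (C.biUnion id).powersetCard 3 := by
      intro A hA
      rw [Finset.mem_powersetCard]
      exact ⟨fun z hz => Finset.mem_biUnion.mpr ⟨A, hA, hz⟩, h3 A hA⟩
    have hle : C.card ≤ ((C.biUnion id).card).choose 3 := by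
      calc C.card ≤ ((C.biUnion id).powersetCard 3).card := Finset.card_le_card hsub
        _ = _ := Finset.card_powersetCard 3 _
    have hch : ∀ u ≤ 4, Nat.choose u 3 ≤ u := by decide
    exact hle.trans (hch _ h4)

lemma family_card : ∀ (N : ℕ) (S : Finset (Finset ℕ)) (V : Finset ℕ), S.card = N →
    (∀ A ∈ S, A.card = 3) → (∀ A ∈ S, A ⊆ V) →
    (∀ A ∈ S, ∀ B ∈ S, A ≠ B → (A ∩ B).card ≠ 1) → S.card ≤ V.card := by
  intro N
  induction N using Nat.strong_induction_on with
  | _ N ih =>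
    intro S V hSN h3 hV hint
    rcases S.eq_empty_or_nonempty with rfl | ⟨A₀, hA₀⟩
    · simp
    classical
    set C := S.filter (fun B => 2 ≤ (A₀ ∩ B).card) with hC
    have hCS : C ⊆ S := Finset.filter_subset _ _
    have hA₀C : A₀ ∈ C := by
      rw [hC, Finset.mem_filter]
      exact ⟨hA₀, by rw [Finset.inter_self, h3 A₀ hA₀]; omega⟩
    have hCpair : ∀ A ∈ C, ∀ B ∈ C, A ≠ B → (A ∩ B).card = 2 := by
      intro A hA B hB hAB
      rw [hC, Finset.mem_filter] at hA hB
      have hne : (A ∩ B).Nonempty := meet_trans (h3 A₀ hA₀) hA.2 hB.2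
      rcases inter_card_options h3 hint (hCS (by rw [hC, Finset.mem_filter]; exact hA))
        (hCS (by rw [hC, Finset.mem_filter]; exact hB)) hAB with h | h
      · rw [Finset.card_eq_zero] at h
        exact absurd h hne.ne_empty
      · exact h
    set U := C.biUnion id with hU
    have hCU : C.card ≤ U.card := class_card (fun A hA => h3 A (hCS hA)) hCpair
    set S' := S \ C with hS'
    -- members of S' are disjoint from U
    have hS'U : ∀ E ∈ S', E ∩ U = ∅ := by
      intro E hE
      rw [hS', Finset.mem_sdiff] at hE
      rw [← Finset.disjoint_iff_inter_eq_empty, hU, Finset.disjoint_biUnion_right]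
      intro B hB
      rw [Finset.disjoint_iff_inter_eq_empty]
      have hBC : B ∈ C := hB
      have hBS : B ∈ S := hCS hBC
      have hEB : E ≠ B := by rintro rfl; exact hE.2 hBC
      rcases inter_card_options h3 hint hE.1 hBS hEB with h | h
      · exact Finset.card_eq_zero.mp h
      · exfalso
        -- then E would be in C
        apply hE.2
        rw [hC, Finset.mem_filter]
        refine ⟨hE.1, ?_⟩
        by_cases hEA₀ : E = A₀
        · rw [hEA₀, Finset.inter_self, h3 A₀ hA₀]; omega
        · have hBA0 : 2 ≤ (B ∩ A₀).card := by
            rw [hC, Finset.mem_filter] at hBC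
            rw [Finset.inter_comm]; exact hBC.2
          have hBE : 2 ≤ (B ∩ E).card := by rw [Finset.inter_comm]; omega
          have hne : (A₀ ∩ E).Nonempty := meet_trans (h3 B hBS) hBA0 hBE
          rcases inter_card_options h3 hint hA₀ hE.1 (fun hc => hEA₀ hc.symm) with h0 | h0
          · rw [Finset.card_eq_zero] at h0
            exact absurd h0 hne.ne_empty
          · omega
    have hS'V : ∀ E ∈ S', E ⊆ V \ U := by
      intro E hE z hz
      rw [Finset.mem_sdiff]
      refine ⟨hV E (Finset.mem_sdiff.mp (hS' ▸ hE)).1 hz, ?_⟩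
      intro hzU
      have : z ∈ E ∩ U := Finset.mem_inter.mpr ⟨hz, hzU⟩
      rw [hS'U E hE] at this
      exact absurd this (Finset.notMem_empty z)
    have hUV : U ⊆ V := by
      intro z hz
      obtain ⟨B, hB, hzB⟩ := Finset.mem_biUnion.mp hz
      exact hV B (hCS hB) hzB
    have hS'card : S'.card < N := by
      rw [hS', ← hSN]
      have h1 : 1 ≤ C.card := Finset.card_pos.mpr ⟨A₀, hA₀C⟩
      have := Finset.card_sdiff_add_card_eq_card hCS
      have hlt : (S \ C).card + C.card = S.card := this
      omega
    have hIH := ih S'.card hS'card S' (V \ U) rfl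
      (fun A hA => h3 A ((Finset.sdiff_subset) hA))
      hS'V
      (fun A hA B hB hAB => hint A (Finset.sdiff_subset hA) B (Finset.sdiff_subset hB) hAB)
    have hsplit : S'.card + C.card = S.card := Finset.card_sdiff_add_card_eq_card hCS
    have hVcard : (V \ U).card = V.card - U.card := Finset.card_sdiff_of_subset hUV
    have hUVcard : U.card ≤ V.card := Finset.card_le_card hUV
    omega

def trip (i c : ℕ) : Finset ℕ := {2*i-1, 2*i, c}

lemma trip_mem {i c z : ℕ} : z ∈ trip i c ↔ z = 2*i-1 ∨ z = 2*i ∨ z = c := by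
  simp [trip]

lemma trip_card {i c s : ℕ} (hi : 1 ≤ i) (his : i ≤ s) (hc : 2*s < c) :
    (trip i c).card = 3 := by
  have h1 : (2*i-1 : ℕ) ∉ ({2*i, c} : Finset ℕ) := by
    simp only [Finset.mem_insert, Finset.mem_singleton]; omega
  have h2 : (2*i : ℕ) ∉ ({c} : Finset ℕ) := by
    simp only [Finset.mem_singleton]; omega
  rw [trip, Finset.card_insert_of_notMem h1, Finset.card_insert_of_notMem h2,
    Finset.card_singleton]

lemma trip_nonempty (i c : ℕ) : (trip i c).Nonempty := ⟨c, by simp [trip_mem]⟩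

lemma trip_max {i c s : ℕ} (hi : 1 ≤ i) (his : i ≤ s) (hc : 2*s < c) (h) :
    (trip i c).max' h = c := by
  apply le_antisymm
  · apply Finset.max'_le
    intro z hz; rw [trip_mem] at hz; omega
  · exact Finset.le_max' _ _ (by simp [trip_mem])

lemma trip_min {i c s : ℕ} (hi : 1 ≤ i) (his : i ≤ s) (hc : 2*s < c) (h) :
    (trip i c).min' h = 2*i - 1 := by
  apply le_antisymm
  · exact Finset.min'_le _ _ (by simp [trip_mem])
  · apply Finset.le_min'
    intro z hz; rw [trip_mem] at hz; omega

lemma finset_eq_congr_max {A B : Finset ℕ} (h : A = B) (hA : A.Nonempty) (hB : B.Nonempty) :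
    A.max' hA = B.max' hB := by subst h; rfl

lemma finset_eq_congr_min {A B : Finset ℕ} (h : A = B) (hA : A.Nonempty) (hB : B.Nonempty) :
    A.min' hA = B.min' hB := by subst h; rfl

lemma trip_inter {s i c i' c' : ℕ} (hi : 1 ≤ i) (his : i ≤ s) (hc : 2*s < c)
    (hi' : 1 ≤ i') (his' : i' ≤ s) (hc' : 2*s < c')
    (h : (trip i c ∩ trip i' c').card = 1) : c = c' ∧ i ≠ i' := by
  have hcc : c = c' := by
    by_contra hcc
    by_cases hii : i = i'
    · have : trip i c ∩ trip i' c' = {2*i-1, 2*i} := by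
        ext z
        simp only [Finset.mem_inter, trip_mem, Finset.mem_insert, Finset.mem_singleton]
        omega
      rw [this, Finset.card_insert_of_notMem (by simp; omega), Finset.card_singleton] at h
      omega
    · have : trip i c ∩ trip i' c' = ∅ := by
        ext z
        simp only [Finset.mem_inter, trip_mem, Finset.notMem_empty, iff_false, not_and]
        omega
      rw [this, Finset.card_empty] at h
      omega
  refine ⟨hcc, ?_⟩
  rintro rfl
  rw [hcc, Finset.inter_self, trip_card hi his (hcc ▸ hc)] at h
  omega

lemma vtx_nonempty {n : ℕ} (v : Vtx n) : v.1.Nonempty :=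
  Finset.card_pos.mp (by rw [v.2.2]; norm_num)

set_option maxHeartbeats 1000000 in
lemma construction {n s t L : ℕ} (hs : 1 ≤ s) (ht : 1 ≤ t) (hstn : 2*s + t ≤ n)
    (hL : L ≤ t * s) :
    ∃ W : Finset (Vtx n), W.card = L ∧ 2 * edgesIn n W ≤ t * (s * s) := by
  classical
  set P := (Finset.Icc 1 s) ×ˢ (Finset.Icc (2*s+1) (2*s+t)) with hP
  have hrange : ∀ p ∈ P, 1 ≤ p.1 ∧ p.1 ≤ s ∧ 2*s < p.2 ∧ p.2 ≤ 2*s + t := by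
    intro p hp
    rw [hP, Finset.mem_product, Finset.mem_Icc, Finset.mem_Icc] at hp
    omega
  have hPcard : P.card = s * t := by
    rw [hP, Finset.card_product, Nat.card_Icc, Nat.card_Icc]
    have e1 : s + 1 - 1 = s := by omega
    have e2 : 2*s + t + 1 - (2*s+1) = t := by omega
    rw [e1, e2]
  have hmem : ∀ p ∈ P, trip p.1 p.2 ⊆ Finset.Icc 1 n ∧ (trip p.1 p.2).card = 3 := by
    intro p hp
    obtain ⟨h1, h2, h3, h4⟩ := hrange p hp
    constructor
    · intro z hz
      rw [trip_mem] at hz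
      rw [Finset.mem_Icc]
      omega
    · exact trip_card h1 h2 h3
  set W0 : Finset (Vtx n) := P.attach.image
    (fun p => (⟨trip p.1.1 p.1.2, hmem p.1 p.2⟩ : Vtx n)) with hW0
  have hW0card : W0.card = s * t := by
    rw [hW0, Finset.card_image_of_injOn, Finset.card_attach, hPcard]
    intro p _ q _ h
    rw [Subtype.mk.injEq] at h
    obtain ⟨a1, a2, a3, a4⟩ := hrange p.1 p.2
    obtain ⟨b1, b2, b3, b4⟩ := hrange q.1 q.2
    have hceq : p.1.2 = q.1.2 := by
      rw [← trip_max (i := p.1.1) a1 a2 a3 (trip_nonempty _ _),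
        ← trip_max (i := q.1.1) b1 b2 b3 (trip_nonempty _ _)]
      exact finset_eq_congr_max h _ _
    have hieq : p.1.1 = q.1.1 := by
      have := finset_eq_congr_min h (trip_nonempty _ _) (trip_nonempty _ _)
      rw [trip_min a1 a2 a3, trip_min b1 b2 b3] at this
      omega
    exact Subtype.ext (Prod.ext hieq hceq)
  -- vertices of W0 are trips
  have hW0mem : ∀ v ∈ W0, ∃ p ∈ P, v.1 = trip p.1 p.2 := by
    intro v hv
    rw [hW0, Finset.mem_image] at hv
    obtain ⟨p, _, rfl⟩ := hv
    exact ⟨p.1, p.2, rfl⟩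
  have hpc : pc (G n) W0 ≤ t * (s * s) := by
    rw [pc]
    have htarget : ((Finset.Icc (2*s+1) (2*s+t)) ×ˢ
        ((Finset.Icc 1 s) ×ˢ (Finset.Icc 1 s))).card = t * (s * s) := by
      rw [Finset.card_product, Finset.card_product, Nat.card_Icc, Nat.card_Icc]
      have e1 : s + 1 - 1 = s := by omega
      have e2 : 2*s + t + 1 - (2*s+1) = t := by omega
      rw [e1, e2]
    rw [← htarget]
    apply Finset.card_le_card_of_injOn (fun q =>
      ((q.1 : Vtx n).1.max' (vtx_nonempty _),
        (((q.1 : Vtx n).1.min' (vtx_nonempty _) + 1)/2,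
         ((q.2 : Vtx n).1.min' (vtx_nonempty _) + 1)/2)))
    · rintro ⟨u, v⟩ huv
      simp only [Finset.mem_coe, Finset.mem_filter, Finset.mem_product] at huv
      obtain ⟨⟨hu, hv⟩, hadj⟩ := huv
      obtain ⟨p, hp, hup⟩ := hW0mem u hu
      obtain ⟨q, hq, hvq⟩ := hW0mem v hv
      obtain ⟨a1, a2, a3, a4⟩ := hrange p hp
      obtain ⟨b1, b2, b3, b4⟩ := hrange q hq
      have hadj' : (trip p.1 p.2 ∩ trip q.1 q.2).card = 1 := by
        rw [← hup, ← hvq]; exact hadj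
      obtain ⟨hc, hi⟩ := trip_inter a1 a2 a3 b1 b2 b3 hadj'
      have humax : u.1.max' (vtx_nonempty _) = p.2 := by
        rw [finset_eq_congr_max hup (vtx_nonempty _) (trip_nonempty _ _)]
        exact trip_max a1 a2 a3 _
      have humin : u.1.min' (vtx_nonempty _) = 2*p.1 - 1 := by
        rw [finset_eq_congr_min hup (vtx_nonempty _) (trip_nonempty _ _)]
        exact trip_min a1 a2 a3 _
      have hvmin : v.1.min' (vtx_nonempty _) = 2*q.1 - 1 := by
        rw [finset_eq_congr_min hvq (vtx_nonempty _) (trip_nonempty _ _)]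
        exact trip_min b1 b2 b3 _
      simp only [Finset.mem_coe, Finset.mem_product, Finset.mem_Icc, humax, humin, hvmin]
      omega
    · rintro ⟨u, v⟩ huv ⟨u', v'⟩ huv' heq
      simp only [Finset.mem_coe, Finset.mem_filter, Finset.mem_product] at huv huv'
      obtain ⟨⟨hu, hv⟩, hadj⟩ := huv
      obtain ⟨⟨hu', hv'⟩, hadj'⟩ := huv'
      obtain ⟨p, hp, hup⟩ := hW0mem u hu
      obtain ⟨q, hq, hvq⟩ := hW0mem v hv
      obtain ⟨p', hp', hup'⟩ := hW0mem u' hu'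
      obtain ⟨q', hq', hvq'⟩ := hW0mem v' hv'
      obtain ⟨a1, a2, a3, a4⟩ := hrange p hp
      obtain ⟨b1, b2, b3, b4⟩ := hrange q hq
      obtain ⟨a1', a2', a3', a4'⟩ := hrange p' hp'
      obtain ⟨b1', b2', b3', b4'⟩ := hrange q' hq'
      obtain ⟨hcu, -⟩ := trip_inter a1 a2 a3 b1 b2 b3
        (by rw [← hup, ← hvq]; exact hadj)
      obtain ⟨hcu', -⟩ := trip_inter a1' a2' a3' b1' b2' b3'
        (by rw [← hup', ← hvq']; exact hadj')
      have humax : u.1.max' (vtx_nonempty _) = p.2 := by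
        rw [finset_eq_congr_max hup (vtx_nonempty _) (trip_nonempty _ _)]
        exact trip_max a1 a2 a3 _
      have humax' : u'.1.max' (vtx_nonempty _) = p'.2 := by
        rw [finset_eq_congr_max hup' (vtx_nonempty _) (trip_nonempty _ _)]
        exact trip_max a1' a2' a3' _
      have humin : u.1.min' (vtx_nonempty _) = 2*p.1 - 1 := by
        rw [finset_eq_congr_min hup (vtx_nonempty _) (trip_nonempty _ _)]
        exact trip_min a1 a2 a3 _
      have humin' : u'.1.min' (vtx_nonempty _) = 2*p'.1 - 1 := by
        rw [finset_eq_congr_min hup' (vtx_nonempty _) (trip_nonempty _ _)]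
        exact trip_min a1' a2' a3' _
      have hvmin : v.1.min' (vtx_nonempty _) = 2*q.1 - 1 := by
        rw [finset_eq_congr_min hvq (vtx_nonempty _) (trip_nonempty _ _)]
        exact trip_min b1 b2 b3 _
      have hvmin' : v'.1.min' (vtx_nonempty _) = 2*q'.1 - 1 := by
        rw [finset_eq_congr_min hvq' (vtx_nonempty _) (trip_nonempty _ _)]
        exact trip_min b1' b2' b3' _
      rw [Prod.mk.injEq, Prod.mk.injEq] at heq
      obtain ⟨e1, e2, e3⟩ := heq
      rw [humax, humax'] at e1
      rw [humin, humin'] at e2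
      rw [hvmin, hvmin'] at e3
      have hpi : p.1 = p'.1 := by omega
      have hqi : q.1 = q'.1 := by omega
      have hqc : q.2 = q'.2 := by omega
      have hueq : u = u' := Subtype.ext (by rw [hup, hup', hpi, e1])
      have hveq : v = v' := Subtype.ext (by rw [hvq, hvq', hqi, hqc])
      rw [hueq, hveq]
  have hLW0 : L ≤ W0.card := by rw [hW0card, Nat.mul_comm]; exact hL
  obtain ⟨W, hWsub, hWcard⟩ := Finset.exists_subset_card_eq hLW0
  refine ⟨W, hWcard, ?_⟩
  have h2e : pc (G n) W = 2 * edgesIn n W := pc_eq (G n) W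
  rw [← h2e]
  exact (pc_mono (G n) hWsub).trans hpc

lemma indep_le_alpha {n : ℕ} (I : Finset (Vtx n))
    (hI : ∀ u ∈ I, ∀ v ∈ I, ¬ (G n).Adj u v) : I.card ≤ alpha n := by
  apply le_csSup
  · refine ⟨Fintype.card (Vtx n), ?_⟩
    rintro k ⟨W, hW, -⟩
    rw [← hW]
    exact Finset.card_le_univ W
  · exact ⟨I, rfl, hI⟩

lemma alpha_le (n : ℕ) : alpha n ≤ n := by
  have hne : {k | ∃ W : Finset (Vtx n), W.card = k ∧ ∀ u ∈ W, ∀ v ∈ W, ¬ (G n).Adj u v}.Nonempty :=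
    ⟨0, ∅, by simp, by simp⟩
  apply csSup_le hne
  rintro k ⟨W, hWk, hWind⟩
  classical
  set S := W.image (fun v => v.1) with hS
  have hcard : S.card = W.card := Finset.card_image_of_injective _ Subtype.val_injective
  have hmem : ∀ A ∈ S, ∃ v ∈ W, v.1 = A := by
    intro A hA
    rw [hS, Finset.mem_image] at hA
    obtain ⟨v, hv, rfl⟩ := hA
    exact ⟨v, hv, rfl⟩
  have h := family_card S.card S (Finset.Icc 1 n) rfl
    (by intro A hA; obtain ⟨v, -, rfl⟩ := hmem A hA; exact v.2.2)
    (by intro A hA; obtain ⟨v, -, rfl⟩ := hmem A hA; exact v.2.1)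
    (by
      intro A hA B hB hAB
      obtain ⟨v, hv, rfl⟩ := hmem A hA
      obtain ⟨w, hw, rfl⟩ := hmem B hB
      exact hWind v hv w hw)
  rw [hcard, hWk, Nat.card_Icc] at h
  omega

lemma rmin_lower {n L : ℕ} (W0 : Finset (Vtx n)) (hW0 : W0.card = L) :
    L^2 ≤ 2 * alpha n * rmin n L + alpha n * L := by
  have hne : {m | ∃ W : Finset (Vtx n), W.card = L ∧ edgesIn n W = m}.Nonempty :=
    ⟨edgesIn n W0, W0, hW0, rfl⟩
  obtain ⟨W, hWc, hWe⟩ := Nat.sInf_mem hne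
  have hWe' : edgesIn n W = rmin n L := hWe
  have h := pc_lower (G n) (alpha n) (fun I hI => indep_le_alpha I hI) L W hWc
  have h2 : pc (G n) W = 2 * edgesIn n W := pc_eq (G n) W
  rw [h2, hWe'] at h
  have he : alpha n * (2 * rmin n L) = 2 * alpha n * rmin n L := by ring
  omega

lemma exists_W (n s t L : ℕ) (hs : 1 ≤ s) (ht : 1 ≤ t) (hstn : 2*s + t ≤ n)
    (hL : L ≤ t * s) :
    2 * rmin n L ≤ t * (s * s) ∧ L^2 ≤ 2 * alpha n * rmin n L + alpha n * L := by
  obtain ⟨W, hWc, hWe⟩ := construction hs ht hstn hL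
  constructor
  · have h : rmin n L ≤ edgesIn n W := Nat.sInf_le ⟨W, hWc, rfl⟩
    omega
  · exact rmin_lower W hWc

set_option maxHeartbeats 1000000 in
lemma main_bounds {n L : ℕ} (h0 : 1 ≤ n) (h1 : 100 * n ≤ L) (h2 : 100 * L ≤ n^2) :
    (1 - (n:ℝ)/(L:ℝ)) ≤ (rmin n L : ℝ) * (2 * (alpha n : ℝ)) / (L:ℝ)^2 ∧
    (rmin n L : ℝ) * (2 * (alpha n : ℝ)) / (L:ℝ)^2
      ≤ (1 + 4*(L:ℝ)/(n:ℝ)^2 + 2*(n:ℝ)/(L:ℝ))^2 := by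
  have hn4 : 10000 ≤ n := by nlinarith
  have hL0 : 1 ≤ L := by nlinarith
  obtain ⟨q1, hq1⟩ : ∃ q, L / n = q := ⟨_, rfl⟩
  obtain ⟨q2, hq2⟩ : ∃ q, (4 * L^2) / n^3 = q := ⟨_, rfl⟩
  obtain ⟨s, hs⟩ : ∃ x, x = q1 + q2 + 2 := ⟨_, rfl⟩
  obtain ⟨t, ht⟩ : ∃ x, x = n - 2*s := ⟨_, rfl⟩
  have hdiv1 : n * q1 + L % n = L := by rw [← hq1]; exact Nat.div_add_mod L n
  have hmod1 : L % n < n := Nat.mod_lt L (by omega)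
  have hdiv2 : n^3 * q2 + (4 * L^2) % n^3 = 4 * L^2 := by
    rw [← hq2]; exact Nat.div_add_mod _ _
  have hmod2 : (4 * L^2) % n^3 < n^3 := Nat.mod_lt _ (by positivity)
  have rq1a : (n:ℝ) * q1 ≤ L := by
    have : n * q1 ≤ L := Nat.le.intro hdiv1
    exact_mod_cast this
  have rq1b : (L:ℝ) ≤ n * q1 + n := by
    have : L ≤ n * q1 + n := by omega
    exact_mod_cast this
  have rq2a : (n:ℝ)^3 * q2 ≤ 4 * (L:ℝ)^2 := by
    have : n^3 * q2 ≤ 4 * L^2 := Nat.le.intro hdiv2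
    exact_mod_cast this
  have rq2b : 4 * (L:ℝ)^2 ≤ (n:ℝ)^3 * q2 + (n:ℝ)^3 := by
    have : 4 * L^2 ≤ n^3 * q2 + n^3 := by omega
    exact_mod_cast this
  have rs : (s:ℝ) = (q1:ℝ) + q2 + 2 := by rw [hs]; push_cast; ring
  have rn1 : (1:ℝ) ≤ n := by exact_mod_cast h0
  have rn4 : (10000:ℝ) ≤ n := by exact_mod_cast hn4
  have rh1 : 100 * (n:ℝ) ≤ L := by exact_mod_cast h1
  have rh2 : 100 * (L:ℝ) ≤ (n:ℝ)^2 := by exact_mod_cast h2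
  have hn0 : (0:ℝ) < n := by linarith
  have hL0' : (0:ℝ) < L := by linarith
  have hn2 : (0:ℝ) < (n:ℝ)^2 := by positivity
  have hn3 : (0:ℝ) < (n:ℝ)^3 := by positivity
  have hs0 : (0:ℝ) ≤ s := by positivity
  have u1 : (n:ℝ)^2*((n:ℝ)*q1) ≤ (n:ℝ)^2*L := mul_le_mul_of_nonneg_left rq1a hn2.le
  have u2 : (n:ℝ)^2*L ≤ (n:ℝ)^2*((n:ℝ)*q1) + (n:ℝ)^3 := by nlinarith [rq1b]
  have hA_up : (n:ℝ)^3 * s ≤ (n:ℝ)^2 * L + 4*(L:ℝ)^2 + 2*(n:ℝ)^3 := by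
    rw [rs]; nlinarith [u1, rq2a]
  have hA_lo : (n:ℝ)^2 * L + 4*(L:ℝ)^2 ≤ (n:ℝ)^3 * s := by
    rw [rs]; nlinarith [u2, rq2b]
  have e1 : 4*(L:ℝ)^2 ≤ (4/100 : ℝ) * ((n:ℝ)^2 * L) := by nlinarith [mul_le_mul_of_nonneg_right rh2 hL0'.le]
  have e2 : 2*(n:ℝ)^3 ≤ (2/100 : ℝ) * ((n:ℝ)^2 * L) := by nlinarith [mul_le_mul_of_nonneg_left rh1 hn2.le]
  have h_ns_le : (n:ℝ) * s ≤ (106/100 : ℝ) * L := by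
    have key : (n:ℝ)^2 * ((n:ℝ) * s) ≤ (n:ℝ)^2 * ((106/100 : ℝ) * L) := by
      have r1 : (n:ℝ)^2 * ((n:ℝ)*s) = (n:ℝ)^3 * s := by ring
      have r2 : (n:ℝ)^2*((106/100 : ℝ)*L) = (n:ℝ)^2*L + (4/100 : ℝ)*((n:ℝ)^2*L) + (2/100 : ℝ)*((n:ℝ)^2*L) := by ring
      rw [r1, r2]
      linarith [hA_up, e1, e2]
    exact le_of_mul_le_mul_left key hn2
  have hns0 : (0:ℝ) ≤ (n:ℝ)*s := by positivity
  have h2s : 2 * s < n := by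
    have p1 : 2*(n:ℝ)*((n:ℝ)*s) ≤ 2*(n:ℝ)*((106/100 : ℝ)*L) :=
      mul_le_mul_of_nonneg_left h_ns_le (by linarith)
    have p2 : (n:ℝ)*(100*L) ≤ (n:ℝ)*(n:ℝ)^2 := mul_le_mul_of_nonneg_left rh2 hn0.le
    have key : (n:ℝ)^2 * ((2*s:ℕ):ℝ) < (n:ℝ)^2 * n := by
      push_cast
      nlinarith [p1, p2, hn3]
    have : ((2*s:ℕ):ℝ) < n := lt_of_mul_lt_mul_left key hn2.le
    exact_mod_cast this
  have hts : (t:ℝ) = (n:ℝ) - 2*s := by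
    rw [ht]
    push_cast [Nat.cast_sub (by omega : 2*s ≤ n)]
    ring
  have hfeas : L ≤ t * s := by
    have psq : ((n:ℝ)*s)*((n:ℝ)*s) ≤ ((106/100 : ℝ)*L)*((106/100 : ℝ)*L) :=
      mul_self_le_mul_self hns0 h_ns_le
    have key : (n:ℝ)^2 * L ≤ (n:ℝ)^2 * ((t:ℝ) * s) := by
      rw [hts]
      nlinarith [hA_lo, psq, hL0']
    have : (L:ℝ) ≤ (t:ℝ) * s := le_of_mul_le_mul_left key hn2
    exact_mod_cast this
  obtain ⟨hup, hlo⟩ := exists_W n s t L (by omega) (by omega) (by omega) hfeas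
  obtain ⟨A, hA⟩ : ∃ x, x = alpha n := ⟨_, rfl⟩
  obtain ⟨R, hR⟩ : ∃ x, x = rmin n L := ⟨_, rfl⟩
  rw [← hA, ← hR] at hlo ⊢
  rw [← hR] at hup
  have hAn : A ≤ n := hA ▸ alpha_le n
  have rAn : (A:ℝ) ≤ n := by exact_mod_cast hAn
  have hL2 : (0:ℝ) < (L:ℝ)^2 := by positivity
  constructor
  · rw [le_div_iff₀ hL2]
    have hcast : (L:ℝ)^2 ≤ 2*(A:ℝ)*R + (A:ℝ)*L := by exact_mod_cast hlo
    have he : (1 - (n:ℝ)/L) * (L:ℝ)^2 = (L:ℝ)^2 - (n:ℝ)*L := by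
      field_simp
    rw [he]
    nlinarith [hcast, rAn, hL0']
  · have hXn : (R:ℝ) * (2*(A:ℝ)) ≤ (n:ℝ)^2 * (s:ℝ)^2 := by
      have hnat : R * (2*A) ≤ n^2 * s^2 := by
        calc R * (2*A) = (2*R) * A := by ring
          _ ≤ (t*(s*s)) * n := Nat.mul_le_mul hup hAn
          _ ≤ (n*(s*s)) * n := by
              apply Nat.mul_le_mul_right
              apply Nat.mul_le_mul_right
              omega
          _ = n^2 * s^2 := by ring
      exact_mod_cast hnat
    have step2 : (R:ℝ) * (2*(A:ℝ)) / (L:ℝ)^2 ≤ ((n:ℝ)*s/(L:ℝ))^2 := by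
      rw [div_pow]
      apply (div_le_div_iff_of_pos_right hL2).mpr
      nlinarith [hXn]
    have step3 : (n:ℝ)*s/(L:ℝ) ≤ 1 + 4*(L:ℝ)/(n:ℝ)^2 + 2*(n:ℝ)/(L:ℝ) := by
      rw [div_le_iff₀ hL0']
      have expand : (1 + 4*(L:ℝ)/(n:ℝ)^2 + 2*(n:ℝ)/(L:ℝ)) * L
          = L + 4*(L:ℝ)^2/(n:ℝ)^2 + 2*(n:ℝ) := by
        field_simp
      rw [expand]
      have key : (n:ℝ)^2 * ((n:ℝ)*s) ≤ (n:ℝ)^2 * ((L:ℝ) + 4*(L:ℝ)^2/(n:ℝ)^2 + 2*(n:ℝ)) := by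
        have r3 : (n:ℝ)^2 * ((L:ℝ) + 4*(L:ℝ)^2/(n:ℝ)^2 + 2*(n:ℝ))
            = (n:ℝ)^2*L + 4*(L:ℝ)^2 + 2*(n:ℝ)^3 := by
          field_simp
        have r4 : (n:ℝ)^2 * ((n:ℝ)*s) = (n:ℝ)^3*s := by ring
        rw [r3, r4]
        exact hA_up
      exact le_of_mul_le_mul_left key hn2
    calc (R:ℝ) * (2*(A:ℝ)) / (L:ℝ)^2 ≤ ((n:ℝ)*s/(L:ℝ))^2 := step2
      _ ≤ (1 + 4*(L:ℝ)/(n:ℝ)^2 + 2*(n:ℝ)/(L:ℝ))^2 := by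
          apply pow_le_pow_left₀ (by positivity) step3

open Filter in
/-- If `n = o(f(n))`, `g(n) = o(n²)` and `f(n) ≤ l(n) ≤ g(n)` for all `n`, then
`r(l(n)) ~ l(n)² / (2 α_n)` as `n → ∞`. -/
theorem stmt_3 (f g l : ℕ → ℕ)
    (hf : (fun n : ℕ => (n : ℝ)) =o[atTop] fun n => (f n : ℝ))
    (hg : (fun n => (g n : ℝ)) =o[atTop] fun n : ℕ => (n : ℝ) ^ 2)
    (hl : ∀ n, f n ≤ l n ∧ l n ≤ g n) :
    Tendsto (fun n => (rmin n (l n) : ℝ) * (2 * (alpha n : ℝ)) / (l n : ℝ) ^ 2)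
      atTop (nhds 1) := by
  -- eventual hypotheses
  have hfev : ∀ᶠ n : ℕ in atTop, 100 * n ≤ f n := by
    filter_upwards [Asymptotics.isLittleO_iff.mp hf (by norm_num : (0:ℝ) < 1/100)] with n hn
    rw [Real.norm_eq_abs, Real.norm_eq_abs, abs_of_nonneg (by positivity),
      abs_of_nonneg (by positivity)] at hn
    have : (100 : ℝ) * n ≤ f n := by linarith
    exact_mod_cast this
  have hgev : ∀ᶠ n : ℕ in atTop, 100 * g n ≤ n^2 := by
    filter_upwards [Asymptotics.isLittleO_iff.mp hg (by norm_num : (0:ℝ) < 1/100)] with n hn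
    rw [Real.norm_eq_abs, Real.norm_eq_abs, abs_of_nonneg (by positivity),
      abs_of_nonneg (by positivity)] at hn
    have : (100 : ℝ) * g n ≤ (n:ℝ)^2 := by linarith
    exact_mod_cast this
  have hEv : ∀ᶠ n : ℕ in atTop, 1 ≤ n ∧ 100 * n ≤ l n ∧ 100 * l n ≤ n^2 := by
    filter_upwards [hfev, hgev, eventually_ge_atTop 1] with n h1 h2 h3
    exact ⟨h3, le_trans h1 (hl n).1, le_trans (by have := (hl n).2; omega) h2⟩
  -- limits of the two auxiliary quantities
  have hfpos : ∀ᶠ n : ℕ in atTop, (0:ℝ) < f n := by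
    filter_upwards [hfev, eventually_ge_atTop 1] with n h1 h2
    have : (1:ℕ) ≤ f n := by omega
    exact_mod_cast Nat.lt_of_lt_of_le Nat.zero_lt_one this
  have hnl : Tendsto (fun n : ℕ => (n:ℝ) / (l n : ℝ)) atTop (nhds 0) := by
    apply tendsto_of_tendsto_of_tendsto_of_le_of_le' tendsto_const_nhds
      hf.tendsto_div_nhds_zero
    · filter_upwards with n; positivity
    · filter_upwards [hfpos] with n hn
      apply div_le_div_of_nonneg_left (by positivity) hn
      exact_mod_cast (hl n).1
  have hln2 : Tendsto (fun n : ℕ => (l n : ℝ) / (n:ℝ)^2) atTop (nhds 0) := by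
    apply tendsto_of_tendsto_of_tendsto_of_le_of_le' tendsto_const_nhds
      hg.tendsto_div_nhds_zero
    · filter_upwards with n; positivity
    · filter_upwards [eventually_ge_atTop 1] with n hn
      apply div_le_div_of_nonneg_right ?_ (by positivity)
      · exact_mod_cast (hl n).2
  -- squeeze
  have hlo : Tendsto (fun n : ℕ => 1 - (n:ℝ)/(l n : ℝ)) atTop (nhds 1) := by
    have h := hnl.const_sub (1:ℝ)
    simpa using h
  have hhi : Tendsto (fun n : ℕ => (1 + 4*(l n:ℝ)/(n:ℝ)^2 + 2*(n:ℝ)/(l n:ℝ))^2)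
      atTop (nhds 1) := by
    have h1 : Tendsto (fun n : ℕ => 1 + 4*(l n:ℝ)/(n:ℝ)^2 + 2*(n:ℝ)/(l n:ℝ))
        atTop (nhds 1) := by
      have h := ((hln2.const_mul (4:ℝ)).const_add (1:ℝ)).add (hnl.const_mul (2:ℝ))
      simpa [mul_div_assoc] using h
    simpa using h1.pow 2
  apply tendsto_of_tendsto_of_tendsto_of_le_of_le' hlo hhi
  · filter_upwards [hEv] with n hn
    have h := main_bounds hn.1 hn.2.1 hn.2.2
    simpa [mul_div_assoc, div_div] using h.1
  · filter_upwards [hEv] with n hn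
    have h := main_bounds hn.1 hn.2.1 hn.2.2
    simpa [mul_div_assoc, div_div] using h.2
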